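/- If a linear program max{cᵀy : Ay ≤ d} over a nonempty bounded polyhedron attains its maximum, then the maximum is attained at a vertex of the polyhedron; consequently, if A is totally unimodular and d is integral, the LP relaxation of the corresponding 0-1 integer program has an integral optimal solution with the same optimal value. -/

import Mathlib

open Matrix

/-- An integer matrix is totally unimodular if every square submatrix (viewed
over `ℝ`) has determinant in {0, 1, -1}. -/
def TotallyUnimodular {m n : ℕ} (A : Matrix (Fin m) (Fin n) ℤ) : Prop :=
  ∀ (k : ℕ) (f : Fin k → Fin m) (g : Fin k → Fin n), Function.Injective f →
    Function.Injective g →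
      ((A.map (Int.cast : ℤ → ℝ)).submatrix f g).det ∈ ({0, 1, -1} : Set ℝ)

/-- If a finite family of vectors in `ℝⁿ` (the rows of a matrix) has trivial
"orthogonal complement" in the sense that `M.mulVec w = 0` implies `w = 0`,
then the rows span all of `ℝⁿ`. -/
lemma span_rows_eq_top_of_mulVec_injective {n : ℕ} {ι : Type*} [Fintype ι]
    (M : Matrix ι (Fin n) ℝ) (h : ∀ w : Fin n → ℝ, M.mulVec w = 0 → w = 0) :
    Submodule.span ℝ (Set.range fun i => M i) = ⊤ := by
  have hinj : Function.Injective M.mulVecLin := by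
    rw [← LinearMap.ker_eq_bot, LinearMap.ker_eq_bot']
    exact fun w hw => h w hw
  have h1 : M.rank = n := by
    rw [Matrix.rank, LinearMap.finrank_range_of_inj hinj, Module.finrank_fin_fun]
  have h3 : (Mᵀ).rank = n := by rw [Matrix.rank_transpose]; exact h1
  have h4 : LinearMap.range (Mᵀ).mulVecLin = ⊤ := by
    apply Submodule.eq_top_of_finrank_eq
    rw [← Matrix.rank, h3, Module.finrank_fin_fun]
  rw [Matrix.range_mulVecLin] at h4
  exact h4

theorem lp_max_attained_at_vertex_and_integral {m n : ℕ}
    (A : Matrix (Fin m) (Fin n) ℤ) (d : Fin m → ℤ) (c : Fin n → ℝ)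
    (P : Set (Fin n → ℝ))
    (hP : P = {y | ∀ i, (A.map (Int.cast : ℤ → ℝ)).mulVec y i ≤ (d i : ℝ)})
    (hne : P.Nonempty) (hbdd : Bornology.IsBounded P)
    (ystar : Fin n → ℝ) (hystar : ystar ∈ P)
    (hmax : ∀ y ∈ P, Finset.univ.sum (fun j => c j * y j) ≤
      Finset.univ.sum (fun j => c j * ystar j)) :
    (∃ v ∈ P, (∀ y₁ ∈ P, ∀ y₂ ∈ P, ∀ t : ℝ, 0 < t → t < 1 →
        v = t • y₁ + (1 - t) • y₂ → y₁ = y₂) ∧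
      Finset.univ.sum (fun j => c j * v j) =
        Finset.univ.sum (fun j => c j * ystar j)) ∧
    (TotallyUnimodular A →
      ∃ v ∈ P, (∀ j, ∃ z : ℤ, v j = (z : ℝ)) ∧
        Finset.univ.sum (fun j => c j * v j) =
          Finset.univ.sum (fun j => c j * ystar j)) := by
  classical
  set Ar : Matrix (Fin m) (Fin n) ℝ := A.map (Int.cast : ℤ → ℝ) with hAr
  set obj : (Fin n → ℝ) → ℝ := fun y => Finset.univ.sum (fun j => c j * y j) with hobj
  -- continuity of the linear maps involved
  have hcontRow : ∀ i : Fin m, Continuous fun y : Fin n → ℝ => Ar.mulVec y i := by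
    intro i
    have : (fun y : Fin n → ℝ => Ar.mulVec y i) =
        fun y => Finset.univ.sum fun j => Ar i j * y j := by
      funext y; simp [Matrix.mulVec, dotProduct]
    rw [this]
    exact continuous_finset_sum _ fun j _ => continuous_const.mul (continuous_apply j)
  have hcontObj : Continuous obj :=
    continuous_finset_sum _ fun j _ => continuous_const.mul (continuous_apply j)
  -- P is closed and compact
  have hPclosed : IsClosed P := by
    rw [hP]
    have : {y : Fin n → ℝ | ∀ i, Ar.mulVec y i ≤ (d i : ℝ)} =
        ⋂ i, {y | Ar.mulVec y i ≤ (d i : ℝ)} := by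
      ext y; simp
    rw [this]
    exact isClosed_iInter fun i => isClosed_le (hcontRow i) continuous_const
  have hPcompact : IsCompact P := Metric.isCompact_of_isClosed_isBounded hPclosed hbdd
  -- the optimal face
  set F : Set (Fin n → ℝ) := {y | y ∈ P ∧ obj y = obj ystar} with hF
  have hFcompact : IsCompact F := by
    have : F = P ∩ {y | obj y = obj ystar} := rfl
    rw [this]
    exact hPcompact.inter_right (isClosed_eq hcontObj continuous_const)
  have hFne : F.Nonempty := ⟨ystar, hystar, rfl⟩
  obtain ⟨v, hvF⟩ := hFcompact.extremePoints_nonempty hFne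
  obtain ⟨⟨hvP, hvobj⟩, hvex⟩ := mem_extremePoints.mp hvF
  -- the key extreme-point property, with respect to P
  have hkey : ∀ y₁ ∈ P, ∀ y₂ ∈ P, ∀ t : ℝ, 0 < t → t < 1 →
      v = t • y₁ + (1 - t) • y₂ → y₁ = y₂ := by
    intro y₁ hy₁ y₂ hy₂ t ht0 ht1 hveq
    have hc1 : obj y₁ ≤ obj ystar := hmax y₁ hy₁
    have hc2 : obj y₂ ≤ obj ystar := hmax y₂ hy₂
    have hlin : obj ystar = t * obj y₁ + (1 - t) * obj y₂ := by
      rw [← hvobj, hveq, hobj]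
      simp only [Finset.mul_sum, ← Finset.sum_add_distrib]
      refine Finset.sum_congr rfl fun j _ => ?_
      simp only [Pi.add_apply, Pi.smul_apply, smul_eq_mul]
      ring
    have h1 : obj y₁ = obj ystar := by nlinarith
    have h2 : obj y₂ = obj ystar := by nlinarith
    have := hvex (x₁ := y₁) ⟨hy₁, h1⟩ (x₂ := y₂) ⟨hy₂, h2⟩
      ⟨t, 1 - t, ht0, by linarith, by ring, hveq.symm⟩
    exact this.1.trans this.2.symm
  refine ⟨⟨v, hvP, hkey, hvobj⟩, ?_⟩
  intro hTU
  -- the tight constraint set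
  set Tset : Set (Fin m) := {i | Ar.mulVec v i = (d i : ℝ)} with hT
  have hvle : ∀ i, Ar.mulVec v i ≤ (d i : ℝ) := by
    rw [hP] at hvP; exact hvP
  -- Step A: no nonzero direction is orthogonal to all tight rows
  have hker : ∀ w : Fin n → ℝ, (∀ i ∈ Tset, Ar.mulVec w i = 0) → w = 0 := by
    intro w hw
    have hslack : ∃ ε : ℝ, 0 < ε ∧
        ∀ i, i ∉ Tset → ε * |Ar.mulVec w i| ≤ (d i : ℝ) - Ar.mulVec v i := by
      by_cases hS : (Finset.univ.filter (fun i => i ∉ Tset)).Nonempty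
      · refine ⟨(Finset.univ.filter (fun i => i ∉ Tset)).inf' hS
          (fun i => ((d i : ℝ) - Ar.mulVec v i) / (|Ar.mulVec w i| + 1)), ?_, ?_⟩
        · rw [Finset.lt_inf'_iff]
          intro i hi
          rw [Finset.mem_filter] at hi
          have h2 : Ar.mulVec v i ≠ (d i : ℝ) := hi.2
          have hpos : 0 < (d i : ℝ) - Ar.mulVec v i := by
            have := hvle i; cases lt_or_eq_of_le this with
            | inl h => linarith
            | inr h => exact absurd h h2
          positivity
        · intro i hi
          have hmem : i ∈ Finset.univ.filter (fun i => i ∉ Tset) := by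
            simp [hi]
          have hle := Finset.inf'_le
            (fun i => ((d i : ℝ) - Ar.mulVec v i) / (|Ar.mulVec w i| + 1)) hmem
          have h2 : Ar.mulVec v i ≠ (d i : ℝ) := hi
          have hpos : 0 < (d i : ℝ) - Ar.mulVec v i := by
            have := hvle i; cases lt_or_eq_of_le this with
            | inl h => linarith
            | inr h => exact absurd h h2
          have ha : (0:ℝ) ≤ |Ar.mulVec w i| := abs_nonneg _
          calc _ ≤ (((d i : ℝ) - Ar.mulVec v i) / (|Ar.mulVec w i| + 1)) * |Ar.mulVec w i| :=
                mul_le_mul_of_nonneg_right hle ha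
            _ ≤ (d i : ℝ) - Ar.mulVec v i := by
                rw [div_mul_eq_mul_div, div_le_iff₀ (by linarith)]
                nlinarith
      · refine ⟨1, one_pos, fun i hi => absurd ?_ hS⟩
        exact ⟨i, by simp [hi]⟩
    obtain ⟨ε, hε0, hε⟩ := hslack
    have hmem : ∀ s : ℝ, |s| ≤ 1 → v + (s * ε) • w ∈ P := by
      intro s hs
      rw [hP]
      intro i
      have hmv : Ar.mulVec (v + (s * ε) • w) i = Ar.mulVec v i + (s * ε) * Ar.mulVec w i := by
        rw [Matrix.mulVec_add, Matrix.mulVec_smul]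
        simp [smul_eq_mul]
      rw [hmv]
      by_cases hiT : i ∈ Tset
      · rw [hw i hiT, mul_zero, add_zero]
        exact hvle i
      · have h1 : (s * ε) * Ar.mulVec w i ≤ ε * |Ar.mulVec w i| := by
          have habs : |(s * ε) * Ar.mulVec w i| = |s| * ε * |Ar.mulVec w i| := by
            rw [abs_mul, abs_mul, abs_of_pos hε0]
          refine (le_abs_self _).trans ?_
          rw [habs]
          nlinarith [mul_nonneg (mul_nonneg (sub_nonneg.mpr hs) hε0.le)
            (abs_nonneg (Ar.mulVec w i))]
        have h2 := hε i hiT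
        linarith
    have h1 : v + (1 * ε) • w ∈ P := hmem 1 (by norm_num)
    have h2 : v + ((-1) * ε) • w ∈ P := hmem (-1) (by norm_num)
    have hcomb : v = (1/2 : ℝ) • (v + (1 * ε) • w) + (1 - 1/2 : ℝ) • (v + ((-1) * ε) • w) := by
      funext j
      simp only [Pi.add_apply, Pi.smul_apply, smul_eq_mul]
      ring
    have := hkey _ h1 _ h2 (1/2) (by norm_num) (by norm_num) hcomb
    funext j
    have := congrFun this j
    simp only [Pi.add_apply, Pi.smul_apply, smul_eq_mul] at this
    have : ε * w j = - (ε * w j) := by linarith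
    have hwj : ε * w j = 0 := by linarith
    have := mul_eq_zero.mp hwj
    rcases this with h | h
    · exact absurd h (ne_of_gt hε0)
    · exact h
  -- Step B: the tight rows span ℝⁿ
  set Tfin : Finset (Fin m) := Finset.univ.filter (fun i => i ∈ Tset) with hTfin
  set M0 : Matrix {i // i ∈ Tfin} (Fin n) ℝ := Ar.submatrix Subtype.val id with hM0
  have hspan : Submodule.span ℝ (Set.range fun i : {i // i ∈ Tfin} => M0 i) = ⊤ := by
    apply span_rows_eq_top_of_mulVec_injective
    intro w hw
    apply hker w
    intro i hiT
    have hi : i ∈ Tfin := by simp [hTfin, hiT]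
    have := congrFun hw ⟨i, hi⟩
    simpa [hM0, Matrix.mulVec, dotProduct, Matrix.submatrix] using this
  -- Step C: extract a basis of rows
  obtain ⟨s, hsub, hspan', hli⟩ :=
    exists_linearIndependent ℝ (Set.range fun i : {i // i ∈ Tfin} => M0 i)
  have hsfin : s.Finite := (Set.finite_range _).subset hsub
  haveI : Fintype s := hsfin.fintype
  have hspans : Submodule.span ℝ s = ⊤ := by rw [hspan', hspan]
  let b : Module.Basis s ℝ (Fin n → ℝ) := Module.Basis.mk hli (by rw [Subtype.range_coe]; rw [hspans])
  have hcard : Fintype.card s = n := by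
    have := Module.finrank_eq_card_basis b
    rw [Module.finrank_fin_fun] at this
    omega
  let e : Fin n ≃ s := (Fintype.equivFinOfCardEq hcard).symm
  have hchoose : ∀ x : s, ∃ i : {i // i ∈ Tfin}, M0 i = (x : Fin n → ℝ) := fun x => hsub x.2
  choose g hg using hchoose
  set f : Fin n → Fin m := fun k => (g (e k)).1 with hf
  have hfT : ∀ k, f k ∈ Tset := by
    intro k
    have := (g (e k)).2
    simp only [hTfin, Finset.mem_filter] at this
    exact this.2
  have hrow : ∀ k, Ar (f k) = ((e k : s) : Fin n → ℝ) := by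
    intro k
    have := hg (e k)
    funext j
    have := congrFun this j
    simpa [hM0, Matrix.submatrix] using this
  have hfinj : Function.Injective f := by
    intro k k' h
    have h1 : ((e k : s) : Fin n → ℝ) = ((e k' : s) : Fin n → ℝ) := by
      rw [← hrow, ← hrow, h]
    have h2 : (e k : s) = (e k' : s) := Subtype.ext h1
    exact e.injective h2
  -- Step D: integrality via the TU square submatrix
  set B : Matrix (Fin n) (Fin n) ℤ := A.submatrix f id with hB
  set Br : Matrix (Fin n) (Fin n) ℝ := Ar.submatrix f id with hBr
  have hBrB : Br = B.map (Int.cast : ℤ → ℝ) := by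
    ext i j; simp [hBr, hB, hAr, Matrix.submatrix, Matrix.map]
  have hli' : LinearIndependent ℝ (fun k : Fin n => Br k) := by
    have : (fun k : Fin n => Br k) = (fun x : s => (x : Fin n → ℝ)) ∘ e := by
      funext k
      have : Br k = Ar (f k) := by
        funext j; simp [hBr, Matrix.submatrix]
      rw [this, hrow k]
      rfl
    rw [this]
    exact hli.comp e e.injective
  have hBrUnit : IsUnit Br := Matrix.linearIndependent_rows_iff_isUnit.mp hli'
  have hBrdetUnit : IsUnit Br.det := (Matrix.isUnit_iff_isUnit_det Br).mp hBrUnit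
  have hBrdet_ne : Br.det ≠ 0 := hBrdetUnit.ne_zero
  have hTUdet := hTU n f id hfinj (fun a b h => h)
  have hBrdet : Br.det = 1 ∨ Br.det = -1 := by
    rcases hTUdet with h | h | h
    · exact absurd h hBrdet_ne
    · left; exact h
    · right; exact h
  have hBdet : B.det = 1 ∨ B.det = -1 := by
    have hmap : ((B.det : ℤ) : ℝ) = Br.det := by
      rw [hBrB]
      show (Int.castRingHom ℝ) B.det = ((Int.castRingHom ℝ).mapMatrix B).det
      exact RingHom.map_det (Int.castRingHom ℝ) B
    rcases hBrdet with h | h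
    · left
      have h2 : ((B.det : ℤ) : ℝ) = ((1 : ℤ) : ℝ) := by rw [hmap, h]; norm_num
      exact_mod_cast h2
    · right
      have h2 : ((B.det : ℤ) : ℝ) = ((-1 : ℤ) : ℝ) := by rw [hmap, h]; norm_num
      exact_mod_cast h2
  have hBdetUnit : IsUnit B.det := by
    rcases hBdet with h | h
    · rw [h]; exact isUnit_one
    · rw [h]; exact ⟨⟨-1, -1, by norm_num, by norm_num⟩, rfl⟩
  set w : Fin n → ℤ := B⁻¹.mulVec (fun k => d (f k)) with hwdef
  have hBw : B.mulVec w = fun k => d (f k) := by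
    rw [hwdef, Matrix.mulVec_mulVec, Matrix.mul_nonsing_inv _ hBdetUnit, Matrix.one_mulVec]
  have hBrv : Br.mulVec v = fun k => (d (f k) : ℝ) := by
    funext k
    have h1 : Br.mulVec v k = Ar.mulVec v (f k) := by
      simp [hBr, Matrix.mulVec, dotProduct, Matrix.submatrix]
    rw [h1]
    exact hfT k
  have hBrw : Br.mulVec (fun j => (w j : ℝ)) = fun k => (d (f k) : ℝ) := by
    funext k
    have h1 : Br.mulVec (fun j => (w j : ℝ)) k = ((B.mulVec w k : ℤ) : ℝ) := by
      rw [hBrB]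
      simp only [Matrix.mulVec, dotProduct, Matrix.map_apply]
      push_cast
      rfl
    rw [h1, hBw]
  have hveq : v = fun j => (w j : ℝ) := by
    have h1 : Br.mulVec v = Br.mulVec (fun j => (w j : ℝ)) := by rw [hBrv, hBrw]
    have h2 := congrArg (fun x => Br⁻¹.mulVec x) h1
    simpa [Matrix.mulVec_mulVec, Matrix.nonsing_inv_mul _ hBrdetUnit,
      Matrix.one_mulVec] using h2
  exact ⟨v, hvP, fun j => ⟨w j, by rw [hveq]⟩, hvobj⟩
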